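/- (Schuchman's condition, 1-D version) Let D be uniformly distributed on [-δ, δ] and let Q_δ denote the uniform quantizer with step 2δ, i.e., Q_δ(x) = 2δ · round(x/(2δ)). For any real random variable X independent of D, the quantization error e = Q_δ(X + D) − (X + D) is uniformly distributed on [-δ, δ] and is independent of X. -/

import Mathlib

open MeasureTheory ProbabilityTheory

/-- The uniform probability measure on `[-δ, δ]`. -/
noncomputable def unifSym (δ : ℝ) : Measure ℝ :=
  (ENNReal.ofReal (2 * δ))⁻¹ • (volume.restrict (Set.Icc (-δ) δ))

/-- The uniform quantizer with step `2δ`. -/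
noncomputable def unifQuant (δ : ℝ) (x : ℝ) : ℝ := 2 * δ * (round (x / (2 * δ)) : ℤ)

namespace SchuchmanAux

/-- The quantization error function. -/
noncomputable def phi (δ : ℝ) (y : ℝ) : ℝ := unifQuant δ y - y

lemma measurable_phi (δ : ℝ) : Measurable (phi δ) := by
  have h0 : Measurable fun y : ℝ => (round (y / (2 * δ)) : ℤ) := by
    have : Measurable fun y : ℝ => (⌊y / (2 * δ) + 1 / 2⌋ : ℤ) :=
      Int.measurable_floor.comp ((measurable_id.div_const _).add_const _)
    simpa [round_eq] using this
  have h1 : Measurable fun y : ℝ => ((round (y / (2 * δ)) : ℤ) : ℝ) :=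
    (measurable_from_top (f := fun n : ℤ => (n : ℝ))).comp h0
  unfold phi unifQuant
  exact (measurable_const.mul h1).sub measurable_id

lemma phi_period {δ : ℝ} (hδ : 0 < δ) (y : ℝ) (n : ℤ) :
    phi δ (y + n * (2 * δ)) = phi δ y := by
  have h2δ : (2 * δ) ≠ 0 := by positivity
  have : (y + n * (2 * δ)) / (2 * δ) = y / (2 * δ) + n := by
    field_simp
  unfold phi unifQuant
  rw [this, round_add_intCast]
  push_cast
  ring

/-- The quantization error as a function on the circle of circumference `2δ`. -/
noncomputable def phiBar (δ : ℝ) (hδ : 0 < δ) : AddCircle (2 * δ) → ℝ :=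
  fun q => Quotient.liftOn' q (phi δ) (by
    intro a b hab
    rw [QuotientAddGroup.leftRel_apply] at hab
    obtain ⟨n, hn⟩ := hab
    have hb : b = a + n * (2 * δ) := by
      have : -a + b = n * (2 * δ) := by rw [← hn]; simp [zsmul_eq_mul]
      linarith [this]
    rw [hb, phi_period hδ])

lemma phiBar_mk (δ : ℝ) (hδ : 0 < δ) (y : ℝ) :
    phiBar δ hδ (y : AddCircle (2 * δ)) = phi δ y := rfl

lemma measurable_phiBar (δ : ℝ) (hδ : 0 < δ) : Measurable (phiBar δ hδ) := by
  rw [QuotientAddGroup.measurable_from_quotient]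
  exact measurable_phi δ

lemma map_phi_shift {δ : ℝ} [Fact (0 < 2 * δ)] (hδ : 0 < δ) (x : ℝ) :
    Measure.map (fun d => phi δ (x + d)) (volume.restrict (Set.Ioc (-δ) δ)) =
      Measure.map (phiBar δ hδ) (volume : Measure (AddCircle (2 * δ))) := by
  have hadd : MeasurePreserving (fun d : ℝ => x + d)
      (volume.restrict (Set.Ioc (-δ) δ))
      (volume.restrict (Set.Ioc (x - δ) (x - δ + 2 * δ))) := by
    have h := (measurePreserving_add_left volume x).restrict_preimage
      (measurableSet_Ioc (a := x - δ) (b := x - δ + 2 * δ))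
    have hpre : (fun d : ℝ => x + d) ⁻¹' Set.Ioc (x - δ) (x - δ + 2 * δ)
        = Set.Ioc (-δ) δ := by
      ext d
      simp only [Set.mem_preimage, Set.mem_Ioc]
      constructor <;> intro h <;> constructor <;> linarith [h.1, h.2]
    rwa [hpre] at h
  have hmk : MeasurePreserving (fun y : ℝ => (y : AddCircle (2 * δ)))
      (volume.restrict (Set.Ioc (x - δ) (x - δ + 2 * δ))) volume :=
    AddCircle.measurePreserving_mk (2 * δ) (x - δ)
  have hcomp := hmk.comp hadd
  have heq : (fun d : ℝ => phi δ (x + d))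
      = (phiBar δ hδ) ∘ ((fun y : ℝ => (y : AddCircle (2 * δ))) ∘ fun d : ℝ => x + d) := rfl
  rw [heq, ← Measure.map_map (measurable_phiBar δ hδ) hcomp.measurable, hcomp.map_eq]

lemma map_phi_Ioc {δ : ℝ} (hδ : 0 < δ) (x : ℝ) :
    Measure.map (fun d => phi δ (x + d)) (volume.restrict (Set.Ioc (-δ) δ)) =
      volume.restrict (Set.Ioc (-δ) δ) := by
  haveI : Fact (0 < 2 * δ) := ⟨by linarith⟩
  rw [map_phi_shift hδ x, ← map_phi_shift hδ 0]
  have h0 : (fun d => phi δ (0 + d)) = phi δ := by funext d; rw [zero_add]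
  rw [h0]
  -- On `Ioo (-δ) δ`, `phi δ d = -d`.
  have hphi : ∀ d ∈ Set.Ioo (-δ) δ, phi δ d = -d := by
    intro d hd
    have h2δ : (0:ℝ) < 2 * δ := by linarith
    have hr : round (d / (2 * δ)) = 0 := by
      rw [round_eq_zero_iff]
      constructor
      · rw [le_div_iff₀ h2δ]; nlinarith [hd.1]
      · rw [div_lt_iff₀ h2δ]; nlinarith [hd.2]
    unfold phi unifQuant
    rw [hr]
    push_cast
    ring
  have hIooIoc : volume.restrict (Set.Ioo (-δ:ℝ) δ) = volume.restrict (Set.Ioc (-δ:ℝ) δ) :=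
    Measure.restrict_congr_set (Ioo_ae_eq_Ioc)
  rw [← hIooIoc]
  have hcongr : Measure.map (phi δ) (volume.restrict (Set.Ioo (-δ:ℝ) δ))
      = Measure.map (fun d : ℝ => -d) (volume.restrict (Set.Ioo (-δ:ℝ) δ)) := by
    apply Measure.map_congr
    exact (ae_restrict_iff' measurableSet_Ioo).2 (Filter.Eventually.of_forall hphi)
  rw [hcongr]
  have hIooIcc : volume.restrict (Set.Ioo (-δ:ℝ) δ) = volume.restrict (Set.Icc (-δ:ℝ) δ) :=
    Measure.restrict_congr_set (Ioo_ae_eq_Icc)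
  rw [hIooIcc]
  have hneg : MeasurePreserving (fun d : ℝ => -d)
      (volume.restrict (Set.Icc (-δ:ℝ) δ)) (volume.restrict (Set.Icc (-δ:ℝ) δ)) := by
    have h := (Measure.measurePreserving_neg (volume : Measure ℝ)).restrict_preimage
      (measurableSet_Icc (a := -δ) (b := δ))
    have hpre : (Neg.neg : ℝ → ℝ) ⁻¹' Set.Icc (-δ) δ = Set.Icc (-δ) δ := by
      ext d
      simp only [Set.mem_preimage, Set.mem_Icc]
      constructor <;> intro h <;> constructor <;> linarith [h.1, h.2]
    rwa [hpre] at h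
  rw [hneg.map_eq]

lemma unifSym_eq_smul_Ioc {δ : ℝ} :
    unifSym δ = (ENNReal.ofReal (2 * δ))⁻¹ • (volume.restrict (Set.Ioc (-δ) δ)) := by
  rw [unifSym, Measure.restrict_congr_set (Ioc_ae_eq_Icc)]

lemma map_phi_unifSym {δ : ℝ} (hδ : 0 < δ) (x : ℝ) :
    Measure.map (fun d => phi δ (x + d)) (unifSym δ) = unifSym δ := by
  rw [unifSym_eq_smul_Ioc, Measure.map_smul, map_phi_Ioc hδ x]

lemma isProbability_unifSym {δ : ℝ} (hδ : 0 < δ) : IsProbabilityMeasure (unifSym δ) := by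
  constructor
  rw [unifSym]
  simp only [Measure.smul_apply, Measure.restrict_apply MeasurableSet.univ, Set.univ_inter,
    Real.volume_Icc, smul_eq_mul]
  rw [show δ - -δ = 2 * δ by ring]
  exact ENNReal.inv_mul_cancel (by simp [ENNReal.ofReal_pos]; linarith) ENNReal.ofReal_ne_top

end SchuchmanAux

open SchuchmanAux in
/-- Schuchman's condition (1-D version): with subtractive dither `D` uniform on `[-δ, δ]`
independent of the input `X`, the quantization error `e = Q_δ(X + D) − (X + D)` is
uniform on `[-δ, δ]` and independent of `X`. -/
theorem stmt7 {Ω : Type*} [MeasureSpace Ω] [IsProbabilityMeasure (ℙ : Measure Ω)]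
    (δ : ℝ) (hδ : 0 < δ) (D X : Ω → ℝ) (hmD : Measurable D) (hmX : Measurable X)
    (hD : Measure.map D ℙ = unifSym δ)
    (hind : ProbabilityTheory.IndepFun X D ℙ) :
    Measure.map (fun ω => unifQuant δ (X ω + D ω) - (X ω + D ω)) ℙ = unifSym δ ∧
    ProbabilityTheory.IndepFun (fun ω => unifQuant δ (X ω + D ω) - (X ω + D ω)) X ℙ := by
  haveI hνP : IsProbabilityMeasure (unifSym δ) := isProbability_unifSym hδ
  haveI hμP : IsProbabilityMeasure (Measure.map X ℙ) :=
    Measure.isProbabilityMeasure_map hmX.aemeasurable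
  set μ := Measure.map X ℙ with hμ
  set ν := unifSym δ with hν
  -- the error is `phi δ (X + D)`
  have heq : (fun ω => unifQuant δ (X ω + D ω) - (X ω + D ω))
      = fun ω => phi δ (X ω + D ω) := rfl
  set e : Ω → ℝ := fun ω => phi δ (X ω + D ω) with he
  have hme : Measurable e := (measurable_phi δ).comp (hmX.add hmD)
  -- joint law of (X, D)
  have hpair : Measure.map (fun ω => (X ω, D ω)) ℙ = μ.prod ν := by
    rw [← hD]
    exact (indepFun_iff_map_prod_eq_prod_map_map hmX.aemeasurable hmD.aemeasurable).1 hind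
  -- the skew map
  set T : ℝ × ℝ → ℝ × ℝ := fun p => (p.1, phi δ (p.1 + p.2)) with hT
  have hmT : Measurable T :=
    measurable_fst.prodMk ((measurable_phi δ).comp (measurable_fst.add measurable_snd))
  have hTmap : Measure.map T (μ.prod ν) = μ.prod ν := by
    refine (Measure.prod_eq fun s t hs ht => ?_).symm
    rw [Measure.map_apply hmT (hs.prod ht),
      Measure.prod_apply (hmT (hs.prod ht))]
    have hsec : ∀ x : ℝ, ν (Prod.mk x ⁻¹' (T ⁻¹' (s ×ˢ t)))
        = s.indicator (fun _ => ν t) x := by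
      intro x
      by_cases hx : x ∈ s
      · have h1 : Prod.mk x ⁻¹' (T ⁻¹' (s ×ˢ t)) = (fun d => phi δ (x + d)) ⁻¹' t := by
          ext d
          simp [hT, Set.mem_prod, hx]
        have hm2 : Measurable fun d : ℝ => phi δ (x + d) :=
          (measurable_phi δ).comp (measurable_const.add measurable_id)
        rw [h1, ← Measure.map_apply hm2 ht, hν, map_phi_unifSym hδ x, ← hν,
          Set.indicator_of_mem hx]
      · have h1 : Prod.mk x ⁻¹' (T ⁻¹' (s ×ˢ t)) = ∅ := by
          ext d
          simp [hT, Set.mem_prod, hx]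
        rw [h1, Set.indicator_of_notMem hx]
        simp
    simp_rw [hsec]
    rw [lintegral_indicator hs, setLIntegral_const, mul_comm]
  -- joint law of (X, e)
  have hXe : Measure.map (fun ω => (X ω, e ω)) ℙ = μ.prod ν := by
    have hcomp : (fun ω => (X ω, e ω)) = T ∘ (fun ω => (X ω, D ω)) := rfl
    rw [hcomp, ← Measure.map_map hmT (hmX.prodMk hmD), hpair, hTmap]
  -- marginal law of e
  have hemap : Measure.map e ℙ = ν := by
    have h1 : Measure.map e ℙ = Measure.map Prod.snd (μ.prod ν) := by
      rw [← hXe, Measure.map_map measurable_snd (hmX.prodMk hme)]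
      rfl
    rw [h1]
    simp
  constructor
  · rw [heq, hemap]
  · rw [heq]
    rw [indepFun_iff_map_prod_eq_prod_map_map hme.aemeasurable hmX.aemeasurable]
    have hswap : (fun ω => (e ω, X ω)) = Prod.swap ∘ (fun ω => (X ω, e ω)) := rfl
    rw [hswap, ← Measure.map_map measurable_swap (hmX.prodMk hme), hXe,
      Measure.prod_swap, hemap, ← hμ]
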